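/- Let G(t; r, ρ, ζ) = (4√π t^{3/2})⁻¹ exp(-(r² + ρ² + ζ²)/(4t)) I₁(rρ/(2t)). Then for each r > 0 and t > 0, (∫_{-∞}^∞ ∫_0^∞ |G(t; r, ρ, ζ)|² ρ dρ dζ)^{1/2} ≤ C t^{-3/4} exp(-r²/(8t)) √(I₁(r²/(4t))) for some absolute constant C. -/

import Mathlib

open Real MeasureTheory

/-- The modified Bessel function of the first kind of order 1,
`I₁(x) = ∑_{m=0}^∞ (1/(m!(m+1)!)) (x/2)^{2m+1}`. -/
noncomputable def besselI1 (x : ℝ) : ℝ :=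
  ∑' m : ℕ, (1 / (Nat.factorial m * Nat.factorial (m + 1)) : ℝ) * (x / 2) ^ (2 * m + 1)

/-- The heat kernel of `∂_t - (Δ - 1/r²)` in the axially symmetric setting. -/
noncomputable def G (t r ρ ζ : ℝ) : ℝ :=
  (4 * Real.sqrt π * t ^ ((3 : ℝ) / 2))⁻¹ *
    Real.exp (-(r ^ 2 + ρ ^ 2 + ζ ^ 2) / (4 * t)) * besselI1 (r * ρ / (2 * t))

namespace HK14

open Finset Polynomial
open scoped Nat

noncomputable def cc (m : ℕ) : ℝ := 1 / ((m ! : ℝ) * ((m + 1)! : ℝ))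

noncomputable def ee (j : ℕ) : ℝ := (1/2)^j / (j ! : ℝ)

noncomputable def gg (i : ℕ) : ℝ := if i % 2 = 1 then (1/4)^i * cc (i/2) else 0

lemma cc_pos (m : ℕ) : 0 < cc m := by
  unfold cc
  positivity

lemma trinom (k : ℕ) :
    (2*k+2).choose k = ∑ m ∈ Finset.range (k+1),
      2^(k-2*m) * ((k+1).choose (k-m)) * ((k-m).choose m) := by
  have h2 : (X + 1 : Polynomial ℕ) ^ (2*k+2) = (X*(X + C 2) + 1) ^ (k+1) := by
    have h3 : (2*k+2) = 2*(k+1) := by ring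
    rw [h3, pow_mul]
    congr 1
    have : (C 2 : Polynomial ℕ) = 2 := by simp
    rw [this]; ring
  have h1 : ((X + 1 : Polynomial ℕ) ^ (2*k+2)).coeff k = (2*k+2).choose k := by
    rw [coeff_X_add_one_pow, Nat.cast_id]
  have hterm : ∀ j ∈ Finset.range (k+2),
      ((X*(X + C 2))^j * 1^(k+1-j) * ((k+1).choose j : Polynomial ℕ)).coeff k
        = if j ≤ k then 2^(j-(k-j)) * j.choose (k-j) * (k+1).choose j else 0 := by
    intro j hj
    rw [one_pow, mul_one, ← C_eq_natCast, coeff_mul_C, mul_pow,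
      mul_comm ((X:Polynomial ℕ)^j), coeff_mul_X_pow', coeff_X_add_C_pow]
    split_ifs with h
    · push_cast; ring
    · simp
  have key : (2*k+2).choose k
      = ∑ j ∈ Finset.range (k+2), if j ≤ k then 2^(j-(k-j)) * j.choose (k-j) * (k+1).choose j else 0 := by
    rw [← h1, h2, add_pow, finset_sum_coeff, Finset.sum_congr rfl hterm]
  rw [key, Finset.sum_range_succ, if_neg (by omega), add_zero]
  rw [← Finset.sum_range_reflect]
  apply Finset.sum_congr rfl
  intro m hm
  simp only [Finset.mem_range] at hm
  have hmk : m ≤ k := by omega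
  have e1 : k + 1 - 1 - m = k - m := by omega
  have e2 : k - (k - m) = m := Nat.sub_sub_self hmk
  rw [e1, if_pos (Nat.sub_le _ _), e2]
  have e3 : k - m - m = k - 2*m := by omega
  rw [e3]; ring

lemma d_eq_sum (k : ℕ) :
    ∑ p ∈ antidiagonal k, cc p.1 * cc p.2
      = ((2*k+2).choose k : ℝ) / (((k+1)! : ℝ))^2 := by
  have hv : ((k+1) + (k+1)).choose k = ∑ p ∈ antidiagonal k, (k+1).choose p.1 * (k+1).choose p.2 :=
    Nat.add_choose_eq (k+1) (k+1) k
  have h2 : 2*k+2 = (k+1)+(k+1) := by ring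
  rw [h2, hv]
  push_cast
  rw [Finset.sum_div]
  apply Finset.sum_congr rfl
  intro p hp
  rw [Finset.HasAntidiagonal.mem_antidiagonal] at hp
  obtain ⟨i, j⟩ := p
  simp only at hp ⊢
  have hij : i + j = k := hp
  have h1 : ((k+1).choose i : ℝ) = ((k+1)! : ℝ) / ((i ! : ℝ) * ((j+1)! : ℝ)) := by
    rw [Nat.cast_choose ℝ (by omega : i ≤ k+1), show k+1-i = j+1 by omega]
  have h2 : ((k+1).choose j : ℝ) = ((k+1)! : ℝ) / ((j ! : ℝ) * ((i+1)! : ℝ)) := by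
    rw [Nat.cast_choose ℝ (by omega : j ≤ k+1), show k+1-j = i+1 by omega]
  rw [h1, h2]
  unfold cc
  have f1 : (i ! : ℝ) ≠ 0 := Nat.cast_ne_zero.2 (Nat.factorial_ne_zero i)
  have f2 : (j ! : ℝ) ≠ 0 := Nat.cast_ne_zero.2 (Nat.factorial_ne_zero j)
  have f3 : ((i+1)! : ℝ) ≠ 0 := Nat.cast_ne_zero.2 (Nat.factorial_ne_zero _)
  have f4 : ((j+1)! : ℝ) ≠ 0 := Nat.cast_ne_zero.2 (Nat.factorial_ne_zero _)
  have f5 : (((k+1))! : ℝ) ≠ 0 := Nat.cast_ne_zero.2 (Nat.factorial_ne_zero _)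
  field_simp

lemma coeff_id (k : ℕ) :
    ((2*k+2).choose k : ℝ) / (((k+1)! : ℝ) * 4^(k+1))
      = ∑ p ∈ antidiagonal (k+1), ee p.1 * gg p.2 := by
  rw [Finset.Nat.sum_antidiagonal_eq_sum_range_succ (fun a b => ee a * gg b)]
  rw [trinom k]
  push_cast
  rw [Finset.sum_div]
  refine Finset.sum_bij_ne_zero (fun m _ _ => k - 2*m) ?_ ?_ ?_ ?_
  · intro m hm hne
    simp only [Finset.mem_range] at *
    omega
  · intro m1 h11 h12 m2 h21 h22 heq
    have c1 : 2*m1 ≤ k := by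
      by_contra hc
      apply h12
      rw [Nat.choose_eq_zero_of_lt (by omega : k - m1 < m1)]
      push_cast
      ring
    have c2 : 2*m2 ≤ k := by
      by_contra hc
      apply h22
      rw [Nat.choose_eq_zero_of_lt (by omega : k - m2 < m2)]
      push_cast
      ring
    beta_reduce at heq
    omega
  · intro j hj hne
    simp only [Finset.mem_range] at hj
    have hg : gg (k+1-j) ≠ 0 := by
      intro h0
      apply hne
      rw [h0, mul_zero]
    have hodd : (k+1-j) % 2 = 1 := by
      by_contra hc
      apply hg
      unfold gg
      rw [if_neg hc]
    refine ⟨(k-j)/2, ?_, ?_, ?_⟩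
    · simp only [Finset.mem_range]; omega
    · -- nonzero
      beta_reduce
      have p1 : 0 < ((k+1).choose (k - (k-j)/2)) := Nat.choose_pos (by omega)
      have p2 : 0 < ((k - (k-j)/2).choose ((k-j)/2)) := Nat.choose_pos (by omega)
      have p5 : (0:ℝ) < ((k+1)! : ℝ) := by positivity
      apply ne_of_gt
      apply div_pos
      · apply mul_pos (mul_pos (by positivity) _)
        · exact_mod_cast Nat.cast_pos.2 p2
        · exact_mod_cast Nat.cast_pos.2 p1
      · positivity
    · beta_reduce
      omega
  · intro m hm hne
    simp only [Finset.mem_range] at hm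
    have c1 : 2*m ≤ k := by
      by_contra hc
      apply hne
      rw [Nat.choose_eq_zero_of_lt (by omega : k - m < m)]
      push_cast
      ring
    beta_reduce
    have h1 : k + 1 - (k - 2*m) = 2*m+1 := by omega
    rw [h1]
    have hgg : gg (2*m+1) = (1/4)^(2*m+1) * cc m := by
      unfold gg
      rw [if_pos (by omega), show (2*m+1)/2 = m by omega]
    rw [hgg]
    unfold ee cc
    have hc1 : ((k+1).choose (k-m) : ℝ) = ((k+1)! : ℝ) / (((k-m)! : ℝ) * ((m+1)! : ℝ)) := by
      rw [Nat.cast_choose ℝ (by omega : k-m ≤ k+1), show k+1-(k-m) = m+1 by omega]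
    have hc2 : ((k-m).choose m : ℝ) = ((k-m)! : ℝ) / ((m ! : ℝ) * ((k-2*m)! : ℝ)) := by
      rw [Nat.cast_choose ℝ (by omega : m ≤ k-m), show k-m-m = k-2*m by omega]
    rw [hc1, hc2]
    have f1 : (m ! : ℝ) ≠ 0 := Nat.cast_ne_zero.2 (Nat.factorial_ne_zero _)
    have f2 : ((m+1)! : ℝ) ≠ 0 := Nat.cast_ne_zero.2 (Nat.factorial_ne_zero _)
    have f3 : ((k-m)! : ℝ) ≠ 0 := Nat.cast_ne_zero.2 (Nat.factorial_ne_zero _)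
    have f4 : ((k-2*m)! : ℝ) ≠ 0 := Nat.cast_ne_zero.2 (Nat.factorial_ne_zero _)
    have f5 : ((k+1)! : ℝ) ≠ 0 := Nat.cast_ne_zero.2 (Nat.factorial_ne_zero _)
    have hpow : (4:ℝ)^(k+1) = 2^(k-2*m) * 2^(k-2*m) * 4^(2*m+1) := by
      rw [show k+1 = (k-2*m) + (2*m+1) by omega, pow_add, show (4:ℝ) = 2*2 by norm_num, mul_pow]
    rw [hpow]
    have t2 : (2:ℝ)^(k-2*m) ≠ 0 := by positivity
    simp only [one_div, inv_pow]
    field_simp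

lemma besselI1_eq (x : ℝ) : besselI1 x = ∑' m, cc m * (x/2)^(2*m+1) := rfl

lemma summable_norm_bessel (x : ℝ) :
    Summable (fun m : ℕ => ‖cc m * (x/2)^(2*m+1)‖) := by
  apply Summable.of_nonneg_of_le (fun m => norm_nonneg _) (fun m => ?_)
    (((Real.summable_pow_div_factorial ((x/2)^2)).mul_left (|x/2|)))
  rw [norm_mul, Real.norm_eq_abs, Real.norm_eq_abs, abs_of_pos (cc_pos m), abs_pow]
  have h1 : |x/2|^(2*m+1) = ((x/2)^2)^m * |x/2| := by
    rw [pow_succ, pow_mul, sq_abs]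
  rw [h1]
  have h2 : cc m ≤ 1/(m ! : ℝ) := by
    unfold cc
    exact one_div_le_one_div_of_le (by positivity)
      (le_mul_of_one_le_right (by positivity)
        (by exact_mod_cast Nat.one_le_iff_ne_zero.2 (Nat.factorial_ne_zero _)))
  calc cc m * (((x/2)^2)^m * |x/2|) ≤ (1/(m ! : ℝ)) * (((x/2)^2)^m * |x/2|) := by
        apply mul_le_mul_of_nonneg_right h2 (by positivity)
    _ = |x/2| * (((x/2)^2)^m / (m ! : ℝ)) := by ring

lemma summable_bessel (x : ℝ) : Summable (fun m : ℕ => cc m * (x/2)^(2*m+1)) :=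
  (summable_norm_bessel x).of_norm

lemma besselI1_nonneg {x : ℝ} (hx : 0 ≤ x) : 0 ≤ besselI1 x := by
  rw [besselI1_eq]
  apply tsum_nonneg
  intro m
  have := cc_pos m
  positivity

lemma moment (k : ℕ) :
    ∫ s in Set.Ioi (0:ℝ), Real.exp (-s^2) * s^(2*k+3) = ((k+1)! : ℝ) / 2 := by
  have h := integral_comp_rpow_Ioi_of_pos
    (g := fun u => Real.exp (-u) * u ^ (k+1)) (p := 2) two_pos
  have h2 : ∀ x ∈ Set.Ioi (0:ℝ),
      (2 * x ^ ((2:ℝ) - 1)) • (Real.exp (-(x ^ (2:ℝ))) * (x ^ (2:ℝ)) ^ (k+1))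
        = 2 * (Real.exp (-x^2) * x^(2*k+3)) := by
    intro x hx
    have hx0 : (0:ℝ) ≤ x := le_of_lt hx
    rw [show (2:ℝ) - 1 = 1 by norm_num, Real.rpow_one,
      Real.rpow_two]
    simp only [smul_eq_mul]
    ring
  rw [setIntegral_congr_fun measurableSet_Ioi h2] at h
  rw [integral_const_mul] at h
  have h3 : ∫ u in Set.Ioi (0:ℝ), Real.exp (-u) * u ^ (k+1) = ((k+1)! : ℝ) := by
    have hg : Real.Gamma ((k+1) + 1) = ((k+1)! : ℝ) := by
      exact_mod_cast Real.Gamma_nat_eq_factorial (k+1)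
    rw [← hg, Real.Gamma_eq_integral (by positivity)]
    apply setIntegral_congr_fun measurableSet_Ioi
    intro x hx
    beta_reduce
    rw [show ((k:ℝ)+1) + 1 - 1 = ((k+1 : ℕ) : ℝ) by push_cast; ring,
      Real.rpow_natCast]
  rw [h3] at h
  linarith

noncomputable def dd (k : ℕ) : ℝ := ∑ p ∈ antidiagonal k, cc p.1 * cc p.2

lemma d_eq (k : ℕ) :
    dd k = ((2*k+2).choose k : ℝ) / (((k+1)! : ℝ))^2 := d_eq_sum k

lemma choose_le_two_pow' (n k : ℕ) : n.choose k ≤ 2^n := by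
  rcases le_or_gt k n with h | h
  · calc n.choose k ≤ ∑ m ∈ range (n+1), n.choose m :=
        Finset.single_le_sum (fun i _ => Nat.zero_le _) (Finset.mem_range.2 (by omega))
      _ = 2^n := Nat.sum_range_choose n
  · rw [Nat.choose_eq_zero_of_lt h]; exact Nat.zero_le _

lemma dd_nonneg (k : ℕ) : 0 ≤ dd k :=
  Finset.sum_nonneg fun p _ => le_of_lt (mul_pos (cc_pos _) (cc_pos _))

lemma integrand_eq (a s : ℝ) :
    Real.exp (-s^2) * besselI1 (a*s)^2 * s
      = ∑' k : ℕ, dd k * (a/2)^(2*k+2) * (Real.exp (-s^2) * s^(2*k+3)) := by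
  have hb : besselI1 (a*s) ^ 2
      = (∑' m : ℕ, cc m * (a*s/2)^(2*m+1)) * (∑' m : ℕ, cc m * (a*s/2)^(2*m+1)) := by
    rw [besselI1_eq, pow_two]
  rw [hb, tsum_mul_tsum_eq_tsum_sum_antidiagonal_of_summable_norm
    (summable_norm_bessel (a*s)) (summable_norm_bessel (a*s))]
  calc Real.exp (-s^2) *
      (∑' k : ℕ, ∑ p ∈ antidiagonal k,
        (cc p.1 * (a*s/2)^(2*p.1+1)) * (cc p.2 * (a*s/2)^(2*p.2+1))) * s
      = ∑' k : ℕ, (Real.exp (-s^2) * s) * ∑ p ∈ antidiagonal k,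
        (cc p.1 * (a*s/2)^(2*p.1+1)) * (cc p.2 * (a*s/2)^(2*p.2+1)) := by
        rw [tsum_mul_left]; ring
    _ = ∑' k : ℕ, dd k * (a/2)^(2*k+2) * (Real.exp (-s^2) * s^(2*k+3)) := by
        apply tsum_congr
        intro k
        have hsum : ∑ p ∈ antidiagonal k,
            (cc p.1 * (a*s/2)^(2*p.1+1)) * (cc p.2 * (a*s/2)^(2*p.2+1))
            = dd k * (a*s/2)^(2*k+2) := by
          unfold dd
          rw [Finset.sum_mul]
          apply Finset.sum_congr rfl
          intro p hp
          rw [Finset.HasAntidiagonal.mem_antidiagonal] at hp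
          rw [show 2*k+2 = (2*p.1+1) + (2*p.2+1) by omega, pow_add]
          ring
        rw [hsum, show a*s/2 = (a/2)*s by ring, mul_pow]
        rw [show (2*k+3) = (2*k+2)+1 by omega, pow_succ]
        ring

lemma term_integrableOn (k : ℕ) :
    IntegrableOn (fun s : ℝ => Real.exp (-s^2) * s^(2*k+3)) (Set.Ioi 0) := by
  have h := integrableOn_rpow_mul_exp_neg_rpow
    (s := ((2*k+3 : ℕ) : ℝ)) (p := 2)
    (neg_one_lt_zero.trans_le (by positivity)) (by norm_num)
  apply (h.congr_fun ?_ measurableSet_Ioi)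
  intro x hx
  have hx0 : (0:ℝ) < x := hx
  beta_reduce
  rw [Real.rpow_natCast, Real.rpow_two]
  ring

lemma term_integral_norm (a : ℝ) (k : ℕ) :
    ∫ s in Set.Ioi (0:ℝ), ‖dd k * (a/2)^(2*k+2) * (Real.exp (-s^2) * s^(2*k+3))‖
      = dd k * (a/2)^(2*k+2) * (((k+1)! : ℝ) / 2) := by
  have hc : ∀ s ∈ Set.Ioi (0:ℝ),
      ‖dd k * (a/2)^(2*k+2) * (Real.exp (-s^2) * s^(2*k+3))‖
        = dd k * (a/2)^(2*k+2) * (Real.exp (-s^2) * s^(2*k+3)) := by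
    intro s hs
    have hs0 : (0:ℝ) < s := hs
    have h1 : (0:ℝ) ≤ dd k := dd_nonneg k
    have h2 : (0:ℝ) ≤ (a/2)^(2*k+2) := by
      rw [show 2*k+2 = 2*(k+1) by ring, pow_mul]; positivity
    have h1 : (0:ℝ) ≤ dd k := dd_nonneg k
    rw [Real.norm_eq_abs, abs_of_nonneg (by positivity)]
  rw [setIntegral_congr_fun measurableSet_Ioi hc]
  rw [integral_const_mul]
  rw [moment]

lemma pow_div_two_eq (a : ℝ) (k : ℕ) : (a/2)^(2*k+2) = (a^2)^(k+1) / 4^(k+1) := by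
  rw [show 2*k+2 = 2*(k+1) by ring, pow_mul, ← div_pow, show (a/2)^2 = a^2/4 by ring]

lemma pow_half_nonneg (a : ℝ) (k : ℕ) : (0:ℝ) ≤ (a/2)^(2*k+2) := by
  rw [show 2*k+2 = 2*(k+1) by ring, pow_mul]; positivity

lemma summable_series (a : ℝ) :
    Summable (fun k : ℕ => dd k * (a/2)^(2*k+2) * (((k+1)! : ℝ) / 2)) := by
  apply Summable.of_nonneg_of_le
    (fun k => by
      have h1 := dd_nonneg k
      have h2 := pow_half_nonneg a k
      positivity)
    (fun k => ?_)
    (((Real.summable_pow_div_factorial (a^2)).comp_injective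
      Nat.succ_injective).div_const 2)
  simp only [Function.comp]
  have hch : (((2*k+2).choose k : ℕ) : ℝ) ≤ (4:ℝ)^(k+1) := by
    calc (((2*k+2).choose k : ℕ) : ℝ) ≤ ((2^(2*k+2) : ℕ) : ℝ) := by
          exact_mod_cast choose_le_two_pow' (2*k+2) k
      _ = (4:ℝ)^(k+1) := by
          push_cast
          rw [show 2*k+2 = 2*(k+1) by ring, pow_mul]
          norm_num
  have hf : (0:ℝ) < ((k+1)! : ℝ) := by positivity
  have key : dd k * (a/2)^(2*k+2) * (((k+1)!:ℝ)/2)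
      = (((2*k+2).choose k : ℝ)/4^(k+1)) * (((a^2)^(k+1) / (((k+1)! : ℝ))) / 2) := by
    rw [d_eq, pow_div_two_eq]
    field_simp
  rw [key]
  calc (((2*k+2).choose k : ℝ)/4^(k+1)) * (((a^2)^(k+1) / (((k+1)! : ℝ))) / 2)
      ≤ 1 * (((a^2)^(k+1) / (((k+1)! : ℝ))) / 2) := by
        apply mul_le_mul_of_nonneg_right
        · rw [div_le_one (by positivity)]
          exact hch
        · positivity
    _ = ((a^2)^(k+1) / (((k+1)! : ℝ))) / 2 := one_mul _

lemma exp_eq_tsum' (x : ℝ) : Real.exp x = ∑' j : ℕ, x^j / (j ! : ℝ) := by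
  rw [Real.exp_eq_exp_ℝ, NormedSpace.exp_eq_tsum_div]

lemma ee_eq (a : ℝ) (j : ℕ) : ee j * (a^2)^j = (a^2/2)^j / (j ! : ℝ) := by
  unfold ee
  have h : (a^2/2)^j = (a^2)^j * (1/2)^j := by
    rw [div_eq_mul_one_div, mul_pow]
  rw [h]
  ring

lemma summable_norm_ee (a : ℝ) : Summable (fun j : ℕ => ‖ee j * (a^2)^j‖) := by
  apply Summable.congr (Real.summable_pow_div_factorial (a^2/2))
  intro j
  rw [Real.norm_eq_abs, abs_of_nonneg (by unfold ee; positivity), ee_eq]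

lemma exp_ee (a : ℝ) : Real.exp (a^2/2) = ∑' j : ℕ, ee j * (a^2)^j := by
  rw [exp_eq_tsum' (a^2/2)]
  exact tsum_congr fun j => (ee_eq a j).symm

lemma gg_odd (m : ℕ) : gg (2*m+1) = (1/4)^(2*m+1) * cc m := by
  unfold gg
  rw [if_pos (by omega), show (2*m+1)/2 = m by omega]

lemma gg_term_eq (a : ℝ) (m : ℕ) :
    gg (2*m+1) * (a^2)^(2*m+1) = cc m * ((a^2/2)/2)^(2*m+1) := by
  have h : (a^2/2/2)^(2*m+1) = (a^2)^(2*m+1) * (1/4)^(2*m+1) := by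
    rw [show a^2/2/2 = a^2 * (1/4) by ring, mul_pow]
  rw [gg_odd, h]
  ring

lemma hinj2 : Function.Injective (fun m : ℕ => 2*m+1) := fun m n h => by
  simp only at h; omega

lemma gg_zero_off (i : ℕ) (h : i ∉ Set.range (fun m : ℕ => 2*m+1)) : gg i = 0 := by
  unfold gg
  rw [if_neg]
  intro hc
  exact h ⟨i/2, by simp only; omega⟩

lemma gg_supp (a : ℝ) : Function.support (fun i => gg i * (a^2)^i)
    ⊆ Set.range (fun m : ℕ => 2*m+1) := by
  intro i hi
  rw [Function.mem_support] at hi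
  by_contra hc
  exact hi (by rw [gg_zero_off i hc, zero_mul])

lemma bessel_gg (a : ℝ) : besselI1 (a^2/2) = ∑' i : ℕ, gg i * (a^2)^i := by
  calc besselI1 (a^2/2) = ∑' m : ℕ, cc m * ((a^2/2)/2)^(2*m+1) := besselI1_eq _
    _ = ∑' m : ℕ, gg (2*m+1) * (a^2)^(2*m+1) := tsum_congr fun m => (gg_term_eq a m).symm
    _ = ∑' i : ℕ, gg i * (a^2)^i := Function.Injective.tsum_eq hinj2 (gg_supp a)

lemma summable_norm_gg (a : ℝ) : Summable (fun i : ℕ => ‖gg i * (a^2)^i‖) := by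
  rw [← Function.Injective.summable_iff hinj2 (by
    intro i hi
    rw [gg_zero_off i hi, zero_mul, norm_zero])]
  apply Summable.congr (summable_norm_bessel (a^2/2))
  intro m
  simp only [Function.comp]
  rw [gg_term_eq a m]

lemma exp_mul_bessel (a : ℝ) : Real.exp (a^2/2) * besselI1 (a^2/2)
    = ∑' n : ℕ, (∑ p ∈ antidiagonal n, ee p.1 * gg p.2) * (a^2)^n := by
  rw [exp_ee, bessel_gg, tsum_mul_tsum_eq_tsum_sum_antidiagonal_of_summable_norm
    (summable_norm_ee a) (summable_norm_gg a)]
  apply tsum_congr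
  intro n
  rw [Finset.sum_mul]
  apply Finset.sum_congr rfl
  intro p hp
  rw [Finset.HasAntidiagonal.mem_antidiagonal] at hp
  rw [show n = p.1 + p.2 from hp.symm, pow_add]
  ring

lemma core (a : ℝ) :
    ∫ s in Set.Ioi (0:ℝ), Real.exp (-s^2) * besselI1 (a*s)^2 * s
      = Real.exp (a^2/2) * besselI1 (a^2/2) / 2 := by
  have hint : ∀ k : ℕ, Integrable
      (fun s : ℝ => dd k * (a/2)^(2*k+2) * (Real.exp (-s^2) * s^(2*k+3)))
      (volume.restrict (Set.Ioi 0)) := by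
    intro k
    exact (term_integrableOn k).const_mul _
  have hsum : Summable (fun k : ℕ =>
      ∫ s in Set.Ioi (0:ℝ), ‖dd k * (a/2)^(2*k+2) * (Real.exp (-s^2) * s^(2*k+3))‖) := by
    apply Summable.congr (summable_series a)
    intro k
    rw [term_integral_norm a k]
  have h1 : ∫ s in Set.Ioi (0:ℝ), Real.exp (-s^2) * besselI1 (a*s)^2 * s
      = ∑' k : ℕ, dd k * (a/2)^(2*k+2) * (((k+1)! : ℝ)/2) := by
    calc ∫ s in Set.Ioi (0:ℝ), Real.exp (-s^2) * besselI1 (a*s)^2 * s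
        = ∫ s in Set.Ioi (0:ℝ),
            ∑' k : ℕ, dd k * (a/2)^(2*k+2) * (Real.exp (-s^2) * s^(2*k+3)) := by
          simp_rw [integrand_eq a]
      _ = ∑' k : ℕ, ∫ s in Set.Ioi (0:ℝ),
            dd k * (a/2)^(2*k+2) * (Real.exp (-s^2) * s^(2*k+3)) :=
          (MeasureTheory.integral_tsum_of_summable_integral_norm hint hsum).symm
      _ = ∑' k : ℕ, dd k * (a/2)^(2*k+2) * (((k+1)! : ℝ)/2) := by
          apply tsum_congr
          intro k
          rw [integral_const_mul, moment]
  have hsupp : Function.support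
      (fun n => (∑ p ∈ antidiagonal n, ee p.1 * gg p.2) * (a^2)^n)
      ⊆ Set.range Nat.succ := by
    intro n hn
    rw [Function.mem_support] at hn
    rcases n with _ | m
    · exfalso
      apply hn
      simp [gg]
    · exact ⟨m, rfl⟩
  rw [h1, exp_mul_bessel,
    ← Function.Injective.tsum_eq Nat.succ_injective hsupp, ← tsum_div_const]
  apply tsum_congr
  intro k
  have hk : (Nat.succ k) = k + 1 := rfl
  rw [hk, ← coeff_id k, d_eq, pow_div_two_eq]
  have f5 : ((k+1)! : ℝ) ≠ 0 := Nat.cast_ne_zero.2 (Nat.factorial_ne_zero _)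
  have f6 : ((4:ℝ))^(k+1) ≠ 0 := by positivity
  field_simp

end HK14

theorem stmt14 :
    ∃ C : ℝ, 0 < C ∧ ∀ r t : ℝ, 0 < r → 0 < t →
      Real.sqrt (∫ ζ : ℝ, ∫ ρ in Set.Ioi (0 : ℝ), |G t r ρ ζ| ^ 2 * ρ)
        ≤ C * t ^ (-(3 : ℝ) / 4) * Real.exp (-r ^ 2 / (8 * t)) *
          Real.sqrt (besselI1 (r ^ 2 / (4 * t))) := by
  refine ⟨1, one_pos, ?_⟩
  intro r t hr ht
  have ht' : (t:ℝ) ≠ 0 := ne_of_gt ht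
  have h2t : (0:ℝ) < 2*t := by positivity
  have hsb : 0 < Real.sqrt (2*t) := Real.sqrt_pos.2 h2t
  have hsq : Real.sqrt (2*t)^2 = 2*t := Real.sq_sqrt h2t.le
  set a : ℝ := r / Real.sqrt (2*t) with ha
  set y : ℝ := r^2/(4*t) with hy
  have ha2 : a^2/2 = y := by
    rw [ha, hy, div_pow, hsq]
    field_simp
    ring
  set kK : ℝ := (4 * Real.sqrt π * t ^ ((3 : ℝ) / 2))⁻¹ with hkK
  have hbn : 0 ≤ besselI1 y := HK14.besselI1_nonneg (by positivity)
  -- pointwise factorization of the integrand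
  have hG : ∀ ζ ρ : ℝ, |G t r ρ ζ|^2 * ρ
      = (kK^2 * Real.exp (-(r^2+ζ^2)/(2*t)))
        * (Real.exp (-ρ^2/(2*t)) * besselI1 (r*ρ/(2*t))^2 * ρ) := by
    intro ζ ρ
    rw [sq_abs]
    show ((4 * Real.sqrt π * t ^ ((3 : ℝ) / 2))⁻¹ *
      Real.exp (-(r ^ 2 + ρ ^ 2 + ζ ^ 2) / (4 * t)) * besselI1 (r * ρ / (2 * t)))^2 * ρ = _
    have hexp : Real.exp (-(r^2+ρ^2+ζ^2)/(4*t)) ^ 2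
        = Real.exp (-(r^2+ζ^2)/(2*t)) * Real.exp (-ρ^2/(2*t)) := by
      rw [sq, ← Real.exp_add, ← Real.exp_add]
      congr 1
      field_simp
      ring
    rw [mul_pow, mul_pow, hexp, ← hkK]
    ring
  -- the ρ-integral via substitution and the core identity
  have hJ : ∫ ρ in Set.Ioi (0:ℝ), Real.exp (-ρ^2/(2*t)) * besselI1 (r*ρ/(2*t))^2 * ρ
      = (2*t) * (Real.exp y * besselI1 y / 2) := by
    have h := MeasureTheory.integral_comp_mul_left_Ioi
      (fun ρ => Real.exp (-ρ^2/(2*t)) * besselI1 (r*ρ/(2*t))^2 * ρ) 0 hsb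
    rw [mul_zero] at h
    have hL : ∀ s ∈ Set.Ioi (0:ℝ),
        (fun ρ => Real.exp (-ρ^2/(2*t)) * besselI1 (r*ρ/(2*t))^2 * ρ) (Real.sqrt (2*t) * s)
          = Real.sqrt (2*t) * (Real.exp (-s^2) * besselI1 (a*s)^2 * s) := by
      intro s hs
      beta_reduce
      have e1 : -(Real.sqrt (2*t) * s)^2/(2*t) = -s^2 := by
        rw [mul_pow, hsq]
        field_simp
      have e2 : r * (Real.sqrt (2*t) * s)/(2*t) = a*s := by
        rw [ha, ← hsq]
        field_simp
        ring_nf; rw [Real.sqrt_sq (Real.sqrt_nonneg _)]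
      rw [e1, e2]
      ring
    rw [setIntegral_congr_fun measurableSet_Ioi hL, MeasureTheory.integral_const_mul,
      HK14.core a, ha2, smul_eq_mul] at h
    have h2 : ∫ ρ in Set.Ioi (0:ℝ), Real.exp (-ρ^2/(2*t)) * besselI1 (r*ρ/(2*t))^2 * ρ
        = Real.sqrt (2*t) * (Real.sqrt (2*t) * (Real.exp y * besselI1 y / 2)) := by
      rw [h, ← mul_assoc, mul_inv_cancel₀ (ne_of_gt hsb), one_mul]
    rw [h2, ← mul_assoc, ← sq, hsq]
  -- the inner integral for each ζ
  have hInner : ∀ ζ : ℝ, (∫ ρ in Set.Ioi (0:ℝ), |G t r ρ ζ|^2 * ρ)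
      = (kK^2 * Real.exp (-(r^2+ζ^2)/(2*t))) * ((2*t) * (Real.exp y * besselI1 y / 2)) := by
    intro ζ
    simp_rw [hG ζ]
    rw [MeasureTheory.integral_const_mul, hJ]
  -- the outer integral
  have houter : (∫ ζ : ℝ, ∫ ρ in Set.Ioi (0:ℝ), |G t r ρ ζ|^2 * ρ)
      = (kK^2 * Real.exp (-r^2/(2*t)) * ((2*t) * (Real.exp y * besselI1 y / 2)))
          * Real.sqrt (π / (1/(2*t))) := by
    have hfun : (fun ζ : ℝ => ∫ ρ in Set.Ioi (0:ℝ), |G t r ρ ζ|^2 * ρ)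
        = fun ζ : ℝ => (kK^2 * Real.exp (-r^2/(2*t)) * ((2*t) * (Real.exp y * besselI1 y / 2)))
            * Real.exp (-(1/(2*t)) * ζ^2) := by
      funext ζ
      rw [hInner ζ]
      have hsplit : Real.exp (-(r^2+ζ^2)/(2*t))
          = Real.exp (-r^2/(2*t)) * Real.exp (-(1/(2*t)) * ζ^2) := by
        rw [← Real.exp_add]
        congr 1
        field_simp
        ring
      rw [hsplit]
      ring
    rw [show (∫ ζ : ℝ, ∫ ρ in Set.Ioi (0:ℝ), |G t r ρ ζ|^2 * ρ)
        = ∫ ζ : ℝ, (kK^2 * Real.exp (-r^2/(2*t)) * ((2*t) * (Real.exp y * besselI1 y / 2)))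
            * Real.exp (-(1/(2*t)) * ζ^2) from congrArg _ hfun]
    rw [MeasureTheory.integral_const_mul, integral_gaussian]
  -- rewrite the total as scalar * (exp * bessel)
  have hT2 : (∫ ζ : ℝ, ∫ ρ in Set.Ioi (0:ℝ), |G t r ρ ζ|^2 * ρ)
      = (kK^2 * t * Real.sqrt (π / (1/(2*t)))) * (Real.exp (-y) * besselI1 y) := by
    rw [houter]
    have hee : Real.exp (-r^2/(2*t)) * Real.exp y = Real.exp (-y) := by
      rw [← Real.exp_add]
      congr 1
      rw [hy]
      field_simp
      ring
    calc kK^2 * Real.exp (-r^2/(2*t)) * ((2*t) * (Real.exp y * besselI1 y / 2))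
          * Real.sqrt (π / (1/(2*t)))
        = (kK^2 * t * Real.sqrt (π / (1/(2*t))))
            * ((Real.exp (-r^2/(2*t)) * Real.exp y) * besselI1 y) := by ring
      _ = _ := by rw [hee]
  -- bound the scalar
  have hS : kK^2 * t * Real.sqrt (π / (1/(2*t))) ≤ t ^ (-(3:ℝ)/2) := by
    have hπt : π / (1/(2*t)) = (2*π) * t := by
      field_simp
    have hK2 : kK^2 = (16 * π * (t ^ ((3:ℝ)/2))^2)⁻¹ := by
      rw [hkK, inv_pow]
      congr 1
      rw [mul_pow, mul_pow, Real.sq_sqrt Real.pi_pos.le]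
      ring
    have hu2 : (t ^ ((3:ℝ)/2))^2 = t ^ (3:ℝ) := by
      rw [← Real.rpow_natCast (t ^ ((3:ℝ)/2)) 2, ← Real.rpow_mul ht.le]
      norm_num
    rw [hπt, hK2, hu2, Real.sqrt_mul (by positivity) t, Real.sqrt_eq_rpow t]
    have hc : Real.sqrt (2*π) ≤ 16*π := by
      have h1 : Real.sqrt (2*π) ≤ Real.sqrt ((16*π)^2) := by
        apply Real.sqrt_le_sqrt
        nlinarith [Real.pi_gt_three]
      rwa [Real.sqrt_sq (by positivity)] at h1
    have hrw : (16 * π * t ^ (3:ℝ))⁻¹ * t * (Real.sqrt (2*π) * t ^ ((1:ℝ)/2))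
        = Real.sqrt (2*π) * (16*π)⁻¹ * t ^ (-(3:ℝ)/2) := by
      rw [show t ^ (-(3:ℝ)/2) = t ^ ((-(3:ℝ)) + (1:ℝ) + (1:ℝ)/2) by norm_num,
        Real.rpow_add ht, Real.rpow_add ht, Real.rpow_one, mul_inv,
        ← Real.rpow_neg ht.le]
      ring
    rw [hrw]
    calc Real.sqrt (2*π) * (16*π)⁻¹ * t ^ (-(3:ℝ)/2)
        ≤ 1 * t ^ (-(3:ℝ)/2) := by
          apply mul_le_mul_of_nonneg_right _ (Real.rpow_nonneg ht.le _)
          rw [← div_eq_mul_inv, div_le_one (by positivity)]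
          exact hc
      _ = t ^ (-(3:ℝ)/2) := one_mul _
  have hTle : (∫ ζ : ℝ, ∫ ρ in Set.Ioi (0:ℝ), |G t r ρ ζ|^2 * ρ)
      ≤ t ^ (-(3:ℝ)/2) * (Real.exp (-y) * besselI1 y) := by
    rw [hT2]
    exact mul_le_mul_of_nonneg_right hS (by positivity)
  have hR2 : (t ^ (-(3:ℝ)/4) * Real.exp (-r^2/(8*t)) * Real.sqrt (besselI1 y))^2
      = t ^ (-(3:ℝ)/2) * (Real.exp (-y) * besselI1 y) := by
    rw [mul_pow, mul_pow, Real.sq_sqrt hbn]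
    have e1 : (t ^ (-(3:ℝ)/4))^2 = t ^ (-(3:ℝ)/2) := by
      rw [sq, ← Real.rpow_add ht]
      norm_num
    have e2 : (Real.exp (-r^2/(8*t)))^2 = Real.exp (-y) := by
      rw [sq, ← Real.exp_add, hy]
      congr 1
      field_simp
      ring
    rw [e1, e2]
    ring
  rw [one_mul]
  calc Real.sqrt (∫ ζ : ℝ, ∫ ρ in Set.Ioi (0:ℝ), |G t r ρ ζ|^2 * ρ)
      ≤ Real.sqrt ((t ^ (-(3:ℝ)/4) * Real.exp (-r^2/(8*t)) * Real.sqrt (besselI1 y))^2) := by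
        apply Real.sqrt_le_sqrt
        rw [hR2]
        exact hTle
    _ = t ^ (-(3:ℝ)/4) * Real.exp (-r^2/(8*t)) * Real.sqrt (besselI1 y) := by
        apply Real.sqrt_sq
        positivity
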